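/- arXiv:2106.07002 — 12 statements merged into one kernel-verified Lean document; each statement's English description precedes it below -/
import Mathlib

section
/- For every (z,w) ∈ ℂ² with Im w = |z|², there exists s ∈ ℂ with s² = 1 − 4w² − 4iz² and 1 + s ≠ 0 such that the point (z̃, ζ̃, w̃) := ( 2z/(1+s), 2w/(1+s), 2w/(1+s) ) satisfies the defining equation of 𝒳, i.e. (1−|ζ̃|²)·Im w̃ = |z̃|² + Re( z̃² · conj(ζ̃) ). (This is the algebraic map ι(z,w) = (2z, 2w, 2w)/(1 + √(1−4w²−4iz²)) of the main classification theorem, sending ℍ³ into 𝒳.) -/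
lemma key_div (x y a b p q : ℝ) (hb : b = x^2+y^2)
    (h2 : (p-1)^2 - q^2 = 1 - 4*(a^2-b^2) + 8*x*y)
    (h3 : 2*(p-1)*q = -(8*a*b) - 4*(x^2-y^2))
    (hN : p^2 + q^2 ≠ 0) :
    (1 - 4*(a^2+b^2)/(p^2+q^2)) * (2*(b*p-a*q)/(p^2+q^2))
      = 4*(x^2+y^2)/(p^2+q^2)
        + 8*((x^2-y^2)*(a*p-b*q)+2*x*y*(a*q+b*p))/(p^2+q^2)^2 := by
  have G : (p^2+q^2-4*(a^2+b^2))*(2*(b*p-a*q))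
      = 4*(x^2+y^2)*(p^2+q^2) + 8*((x^2-y^2)*(a*p-b*q)+2*x*y*(a*q+b*p)) := by
    linear_combination (-2*(a*p-b*q))*h3 + (2*(a*q+b*p))*h2 + (4*(p^2+q^2))*hb
  field_simp
  linear_combination G

set_option maxHeartbeats 1000000 in
/-- For every `(z,w) ∈ ℂ²` with `Im w = |z|²`, there exists `s ∈ ℂ` with
`s² = 1 − 4w² − 4iz²` and `1 + s ≠ 0` such that the point
`(z̃, ζ̃, w̃) = (2z/(1+s), 2w/(1+s), 2w/(1+s))` satisfies the defining equation of `𝒳`,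
i.e. `(1−|ζ̃|²)·Im w̃ = |z̃|² + Re(z̃²·conj ζ̃)`.  (This is the algebraic map `ι`.) -/
theorem sphere_to_tube_iota (z w : ℂ) (hH : w.im = ‖z‖ ^ 2) :
    ∃ s : ℂ, s ^ 2 = 1 - 4 * w ^ 2 - 4 * Complex.I * z ^ 2 ∧ 1 + s ≠ 0 ∧
      (1 - ‖2 * w / (1 + s)‖ ^ 2) * (2 * w / (1 + s)).im
        = ‖2 * z / (1 + s)‖ ^ 2
          + ((2 * z / (1 + s)) ^ 2 * (starRingEnd ℂ) (2 * w / (1 + s))).re := by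
  obtain ⟨s0, hs0⟩ := IsAlgClosed.exists_pow_nat_eq
    (1 - 4 * w ^ 2 - 4 * Complex.I * z ^ 2) (n := 2) (by norm_num)
  obtain ⟨s, hs, hne⟩ : ∃ s : ℂ, s ^ 2 = 1 - 4 * w ^ 2 - 4 * Complex.I * z ^ 2 ∧ 1 + s ≠ 0 := by
    by_cases h : 1 + s0 = 0
    · refine ⟨-s0, by rw [neg_pow]; simpa using hs0, ?_⟩
      have h1 : s0 = -1 := by linear_combination h
      rw [h1]; norm_num
    · exact ⟨s0, hs0, h⟩
  refine ⟨s, hs, hne, ?_⟩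
  have hN : (1 + s.re)^2 + s.im^2 ≠ 0 := by
    intro h
    apply hne
    have h1 : (1 + s.re) = 0 ∧ s.im = 0 := by
      constructor <;> nlinarith [sq_nonneg (1 + s.re), sq_nonneg s.im]
    exact Complex.ext (by simpa using h1.1) (by simpa using h1.2)
  have hb : w.im = z.re ^ 2 + z.im ^ 2 := by
    rw [hH, Complex.sq_norm, Complex.normSq_apply]; ring
  rw [Complex.ext_iff] at hs
  obtain ⟨h2, h3⟩ := hs
  simp only [pow_two, Complex.mul_re, Complex.mul_im, Complex.sub_re, Complex.sub_im,
    Complex.one_re, Complex.one_im, Complex.I_re, Complex.I_im, Complex.re_ofNat,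
    Complex.im_ofNat, mul_zero, zero_mul, sub_zero, zero_sub, add_zero, zero_add,
    mul_one, one_mul] at h2 h3
  have h2' : ((1+s.re)-1)^2 - s.im^2 = 1 - 4*(w.re^2-w.im^2) + 8*z.re*z.im := by
    linear_combination h2
  have h3' : 2*((1+s.re)-1)*s.im = -(8*w.re*w.im) - 4*(z.re^2-z.im^2) := by
    linear_combination h3
  have K := key_div z.re z.im w.re w.im (1+s.re) s.im hb h2' h3' hN
  have hNs : Complex.normSq (1 + s) = (1+s.re)^2 + s.im^2 := by
    simp [Complex.normSq_apply]; ring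
  have e_absw : ‖2 * w / (1 + s)‖ ^ 2
      = 4*(w.re^2+w.im^2)/((1+s.re)^2+s.im^2) := by
    rw [Complex.sq_norm, Complex.normSq_div, hNs]
    simp [Complex.normSq_apply, Complex.mul_re, Complex.mul_im]
    ring
  have e_absz : ‖2 * z / (1 + s)‖ ^ 2
      = 4*(z.re^2+z.im^2)/((1+s.re)^2+s.im^2) := by
    rw [Complex.sq_norm, Complex.normSq_div, hNs]
    simp [Complex.normSq_apply, Complex.mul_re, Complex.mul_im]
    ring
  have e_im : (2 * w / (1 + s)).im
      = 2*(w.im*(1+s.re) - w.re*s.im)/((1+s.re)^2+s.im^2) := by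
    rw [Complex.div_im, hNs]
    simp [Complex.mul_im, Complex.mul_re, Complex.add_re, Complex.add_im]
    ring
  have hcc : (starRingEnd ℂ) (1 + s) ≠ 0 := by
    intro h
    apply hne
    have h' := congrArg (starRingEnd ℂ) h
    simpa using h'
  have hm : ((Complex.normSq (1 + s) : ℝ) : ℂ) = (1 + s) * (starRingEnd ℂ) (1 + s) :=
    (Complex.mul_conj _).symm
  have hcc' : 1 + (starRingEnd ℂ) s ≠ 0 := by
    simpa [map_add, map_one] using hcc
  have hden : ((Complex.normSq (1 + s) ^ 2 : ℝ) : ℂ)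
      = (1 + s) ^ 2 * (1 + (starRingEnd ℂ) s) ^ 2 := by
    rw [Complex.ofReal_pow, hm]
    simp only [map_add, map_one]
    ring
  have hfrac : (2 * z / (1 + s)) ^ 2 * (starRingEnd ℂ) (2 * w / (1 + s))
      = (8 * z ^ 2 * (starRingEnd ℂ) w * (starRingEnd ℂ) (1 + s))
        / ((Complex.normSq (1 + s) ^ 2 : ℝ) : ℂ) := by
    rw [hden, map_div₀]
    simp only [map_mul, map_add, map_one, map_ofNat]
    field_simp
    ring
  have e_re : ((2 * z / (1 + s)) ^ 2 * (starRingEnd ℂ) (2 * w / (1 + s))).re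
      = 8*((z.re^2-z.im^2)*(w.re*(1+s.re)-w.im*s.im)
           + 2*z.re*z.im*(w.re*s.im+w.im*(1+s.re)))/(((1+s.re)^2+s.im^2))^2 := by
    rw [hfrac, Complex.div_ofReal_re, hNs]
    simp only [pow_two, Complex.mul_re, Complex.mul_im, Complex.conj_re, Complex.conj_im,
      Complex.add_re, Complex.add_im, Complex.one_re, Complex.one_im, Complex.re_ofNat,
      Complex.im_ofNat, mul_zero, zero_mul, sub_zero, zero_sub, add_zero, zero_add,
      mul_one, one_mul, neg_neg, mul_neg, neg_mul]
    ring
  rw [e_absw, e_absz, e_im, e_re]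
  linear_combination K
end

section
/- The quadratic polynomial map P₁(z,w) := ( zw, (z²−w²)/2, i(z²+w²)/2 ) maps the open unit ball 𝔹² = {(z,w) ∈ ℂ² : |z|² + |w|² < 1} into Cartan's domain D^IV₃, and maps the unit sphere 𝕊³ = {(z,w) ∈ ℂ² : |z|² + |w|² = 1} into the smooth boundary part ℛ of D^IV₃; that is, for |z|² + |w|² < 1 one has ϱ(P₁(z,w)) > 0 and |sum of squares of components of P₁(z,w)| < 1, while for |z|² + |w|² = 1 one has ϱ(P₁(z,w)) = 0 and |sum of squares of components of P₁(z,w)| < 1. -/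
/-- The defining function of Cartan's classical domain of type IV in `ℂ³`. -/
noncomputable def rhoIV (Z : ℂ × ℂ × ℂ) : ℝ :=
  1 - 2 * (‖Z.1‖ ^ 2 + ‖Z.2.1‖ ^ 2 + ‖Z.2.2‖ ^ 2)
    + ‖Z.1 ^ 2 + Z.2.1 ^ 2 + Z.2.2 ^ 2‖ ^ 2

/-- The sum of squares of the components of a point in `ℂ³`. -/
def sumSq (Z : ℂ × ℂ × ℂ) : ℂ := Z.1 ^ 2 + Z.2.1 ^ 2 + Z.2.2 ^ 2

/-- The quadratic polynomial map `P₁(z,w) = (zw, (z²−w²)/2, i(z²+w²)/2)`. -/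
noncomputable def P1 (z w : ℂ) : ℂ × ℂ × ℂ :=
  (z * w, (z ^ 2 - w ^ 2) / 2, Complex.I * (z ^ 2 + w ^ 2) / 2)

/-- The sum of squares of the components of `P₁(z,w)` vanishes identically. -/
lemma sumSq_P1 (z w : ℂ) : sumSq (P1 z w) = 0 := by
  simp only [sumSq, P1]
  field_simp
  linear_combination (z^2+w^2)^2 * Complex.I_sq

/-- `ϱ(P₁(z,w)) = 1 − (|z|² + |w|²)²`. -/
lemma rho_eq (z w : ℂ) : rhoIV (P1 z w) = 1 - (‖z‖ ^ 2 + ‖w‖ ^ 2) ^ 2 := by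
  have h0 := sumSq_P1 z w
  simp only [sumSq, P1] at h0
  simp only [rhoIV, P1, h0]
  simp only [Complex.sq_norm]
  simp only [pow_two, Complex.normSq_apply, Complex.mul_re, Complex.mul_im,
    Complex.div_re, Complex.div_im, Complex.sub_re, Complex.sub_im, Complex.add_re,
    Complex.add_im, Complex.I_re, Complex.I_im, Complex.re_ofNat, Complex.im_ofNat, map_zero]
  ring

/-- `P₁` maps the open unit ball `𝔹² ⊂ ℂ²` into Cartan's domain `D^IV₃`
(`ϱ > 0` and `|sum of squares| < 1`) and the unit sphere `𝕊³` into the smooth boundary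
part `ℛ` (`ϱ = 0` and `|sum of squares| < 1`). -/
theorem P1_proper_ball_to_DIV :
    (∀ z w : ℂ, ‖z‖ ^ 2 + ‖w‖ ^ 2 < 1 →
      0 < rhoIV (P1 z w) ∧ ‖sumSq (P1 z w)‖ < 1) ∧
    (∀ z w : ℂ, ‖z‖ ^ 2 + ‖w‖ ^ 2 = 1 →
      rhoIV (P1 z w) = 0 ∧ ‖sumSq (P1 z w)‖ < 1) := by
  constructor
  · intro z w h
    have hs : 0 ≤ ‖z‖ ^ 2 + ‖w‖ ^ 2 := by positivity
    refine ⟨?_, by simp [sumSq_P1]⟩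
    rw [rho_eq]; nlinarith
  · intro z w h
    refine ⟨?_, by simp [sumSq_P1]⟩
    rw [rho_eq, h]; ring
end

section
/- The map P₋₁(z,w) := ( z, w²/2, i·w²/2 ) maps the open unit ball 𝔹² = {(z,w) ∈ ℂ² : |z|² + |w|² < 1} into Cartan's domain D^IV₃. Moreover, for (z,w) on the unit sphere 𝕊³ = {|z|² + |w|² = 1}: if w ≠ 0 then P₋₁(z,w) lies in the smooth boundary part ℛ (i.e. ϱ(P₋₁(z,w)) = 0 and |sum of squares of components| < 1), while if w = 0 then |sum of squares of the components of P₋₁(z,w)| = 1, so P₋₁ sends the circle {(z,0) : |z| = 1} into the singular part of the boundary of D^IV₃. -/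
/-- The quadratic polynomial map `P₋₁(z,w) = (z, w²/2, i·w²/2)`. -/
noncomputable def Pm1 (z w : ℂ) : ℂ × ℂ × ℂ := (z, w ^ 2 / 2, Complex.I * w ^ 2 / 2)

lemma sumSq_Pm1 (z w : ℂ) : sumSq (Pm1 z w) = z ^ 2 := by
  simp only [sumSq, Pm1]
  have : Complex.I ^ 2 = -1 := Complex.I_sq
  ring_nf
  rw [this]; ring

lemma rho_Pm1 (z w : ℂ) :
    rhoIV (Pm1 z w) = (1 - ‖z‖ ^ 2) ^ 2 - (‖w‖ ^ 2) ^ 2 := by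
  have h1 : ‖w ^ 2 / 2‖ = ‖w‖ ^ 2 / 2 := by
    rw [norm_div, norm_pow]; norm_num
  have h2 : ‖Complex.I * w ^ 2 / 2‖ = ‖w‖ ^ 2 / 2 := by
    rw [norm_div, norm_mul, Complex.norm_I, one_mul, norm_pow]; norm_num
  have h3 : (Pm1 z w).1 ^ 2 + (Pm1 z w).2.1 ^ 2 + (Pm1 z w).2.2 ^ 2 = z ^ 2 :=
    sumSq_Pm1 z w
  simp only [rhoIV, Pm1] at *
  rw [h1, h2, h3, norm_pow]
  ring

/-- `P₋₁` maps the open unit ball into `D^IV₃`; on the unit sphere, if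
`w ≠ 0` it lands in the smooth boundary part `ℛ` (`ϱ = 0` and `|sum of squares| < 1`),
while if `w = 0` then `|sum of squares| = 1`, i.e. the circle `{(z,0) : |z| = 1}` goes
into the singular part of the boundary. -/
theorem Pm1_proper_ball_to_DIV :
    (∀ z w : ℂ, ‖z‖ ^ 2 + ‖w‖ ^ 2 < 1 →
      0 < rhoIV (Pm1 z w) ∧ ‖sumSq (Pm1 z w)‖ < 1) ∧
    (∀ z w : ℂ, ‖z‖ ^ 2 + ‖w‖ ^ 2 = 1 →
      (w ≠ 0 → rhoIV (Pm1 z w) = 0 ∧ ‖sumSq (Pm1 z w)‖ < 1) ∧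
      (w = 0 → ‖sumSq (Pm1 z w)‖ = 1)) := by
  constructor
  · intro z w h
    have hz := norm_nonneg z
    have hw := norm_nonneg w
    rw [rho_Pm1, sumSq_Pm1, norm_pow]
    constructor
    · nlinarith [sq_nonneg ‖z‖, sq_nonneg ‖w‖]
    · nlinarith [sq_nonneg ‖w‖]
  · intro z w h
    constructor
    · intro hw
      have hw' : 0 < ‖w‖ := norm_pos_iff.mpr hw
      rw [rho_Pm1, sumSq_Pm1, norm_pow]
      constructor
      · nlinarith
      · nlinarith [norm_nonneg z]
    · intro hw
      subst hw
      simp only [norm_zero] at h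
      rw [sumSq_Pm1, norm_pow]
      nlinarith
end

section
/- Let R₀(z,w) := ( z/√2, (2w² + 2w − z²)/(4(w+1)), i(2w² + 2w + z²)/(4(w+1)) ). Then for all (z,w) ∈ ℂ² with w ≠ −1, ϱ(R₀(z,w)) = 1 − |z|² − |w|². In particular, R₀ is an isometric-type proper map: it maps the open unit ball 𝔹² into D^IV₃ and the part of the unit sphere 𝕊³ with w ≠ −1 into the zero set of ϱ. -/
/-- The rational map `R₀(z,w) = (z/√2, (2w²+2w−z²)/(4(w+1)), i(2w²+2w+z²)/(4(w+1)))`. -/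
noncomputable def R0 (z w : ℂ) : ℂ × ℂ × ℂ :=
  (z / (Real.sqrt 2 : ℂ), (2 * w ^ 2 + 2 * w - z ^ 2) / (4 * (w + 1)),
    Complex.I * (2 * w ^ 2 + 2 * w + z ^ 2) / (4 * (w + 1)))

lemma sqrt2_sq' : ((Real.sqrt 2 : ℝ) : ℂ) ^ 2 = 2 := by
  norm_cast; exact Real.sq_sqrt (by norm_num)

lemma sumSq_R0 (z w : ℂ) (h : w + 1 ≠ 0) :
    (R0 z w).1 ^ 2 + (R0 z w).2.1 ^ 2 + (R0 z w).2.2 ^ 2 = z ^ 2 / (2 * (w + 1)) := by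
  simp only [R0, div_pow, mul_pow, Complex.I_sq, sqrt2_sq']
  have h4 : (4:ℂ) ^ 2 * (w + 1) ^ 2 ≠ 0 := mul_ne_zero (by norm_num) (pow_ne_zero _ h)
  rw [div_add_div _ _ two_ne_zero h4, div_add_div _ _ (mul_ne_zero two_ne_zero h4) h4,
    div_eq_div_iff (by exact mul_ne_zero (mul_ne_zero two_ne_zero h4) h4) (mul_ne_zero two_ne_zero h)]
  ring

lemma parallelogram' (a b : ℂ) :
    Complex.normSq (a - b) + Complex.normSq (a + b) = 2 * Complex.normSq a + 2 * Complex.normSq b := by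
  simp only [Complex.normSq_apply, Complex.add_re, Complex.add_im, Complex.sub_re, Complex.sub_im]
  ring

lemma rho_key (z w : ℂ) (h : w ≠ -1) :
    rhoIV (R0 z w) = 1 - ‖z‖ ^ 2 - ‖w‖ ^ 2 := by
  have h1 : w + 1 ≠ 0 := fun hc => h (by linear_combination hc)
  have hk : Complex.normSq (w + 1) ≠ 0 := fun hc => h1 (Complex.normSq_eq_zero.mp hc)
  rw [rhoIV, sumSq_R0 z w h1]
  simp only [R0, Complex.sq_norm, Complex.normSq_div, Complex.normSq_mul, Complex.normSq_I,
    Complex.normSq_ofReal]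
  have hs2 : Real.sqrt 2 * Real.sqrt 2 = 2 := Real.mul_self_sqrt (by norm_num)
  have hn4 : Complex.normSq 4 = 16 := by simp [Complex.normSq_apply]; norm_num
  have hn2 : Complex.normSq 2 = 4 := by simp [Complex.normSq_apply]; norm_num
  have hpar := parallelogram' (2 * w ^ 2 + 2 * w) (z ^ 2)
  have ha : Complex.normSq (2 * w ^ 2 + 2 * w) = 4 * Complex.normSq w * Complex.normSq (w + 1) := by
    have : (2 : ℂ) * w ^ 2 + 2 * w = 2 * w * (w + 1) := by ring
    rw [this, Complex.normSq_mul, Complex.normSq_mul, hn2]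
  rw [ha, map_pow] at hpar
  rw [hs2, hn4, hn2, map_pow]
  have hA : Complex.normSq (2 * w ^ 2 + 2 * w - z ^ 2) =
      8 * Complex.normSq w * Complex.normSq (w + 1) + 2 * Complex.normSq z ^ 2
        - Complex.normSq (2 * w ^ 2 + 2 * w + z ^ 2) := by linarith [hpar]
  rw [hA]
  field_simp
  ring

/-- For all `(z,w) ∈ ℂ²` with `w ≠ −1`, `ϱ(R₀(z,w)) = 1 − |z|² − |w|²`.
In particular `R₀` maps the open unit ball `𝔹²` into `D^IV₃` and the part of the unit
sphere with `w ≠ −1` into the zero set of `ϱ`. -/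
theorem R0_isometric_proper :
    (∀ z w : ℂ, w ≠ -1 → rhoIV (R0 z w) = 1 - ‖z‖ ^ 2 - ‖w‖ ^ 2) ∧
    (∀ z w : ℂ, ‖z‖ ^ 2 + ‖w‖ ^ 2 < 1 →
      0 < rhoIV (R0 z w) ∧ ‖sumSq (R0 z w)‖ < 1) ∧
    (∀ z w : ℂ, ‖z‖ ^ 2 + ‖w‖ ^ 2 = 1 → w ≠ -1 →
      rhoIV (R0 z w) = 0) := by
  refine ⟨fun z w h => rho_key z w h, fun z w hlt => ?_, fun z w heq h => by
    rw [rho_key z w h]; linarith⟩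
  have hz : 0 ≤ ‖z‖ ^ 2 := sq_nonneg _
  have hw : w ≠ -1 := by
    intro hc
    rw [hc] at hlt
    simp at hlt
    nlinarith
  have h1 : w + 1 ≠ 0 := fun hc => hw (by linear_combination hc)
  constructor
  · rw [rho_key z w hw]; linarith
  · have hss : sumSq (R0 z w) = z ^ 2 / (2 * (w + 1)) := sumSq_R0 z w h1
    rw [hss, norm_div, norm_pow, norm_mul, Complex.norm_two]
    have htri : (1 : ℝ) ≤ ‖w + 1‖ + ‖w‖ := by
      have := norm_sub_le (w + 1) w
      simpa using this
    have habs : 0 < ‖w + 1‖ := by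
      simpa [norm_pos_iff] using h1
    rw [div_lt_one (by positivity)]
    nlinarith [norm_nonneg w, sq_nonneg (1 - ‖w‖)]
end

section
/- For all z, w, s ∈ ℂ with s² = 1 − z² − w², the point I(z,w) := ( z, w, 1 − s )/√2 satisfies ϱ(I(z,w)) = 1 − |z|² − |w|². (This is the irrational proper map I(z,w) = (z, w, 1 − √(1−z²−w²))/√2 from the ball into Cartan's domain of type IV; the identity holds for either choice of square root s.) -/
/-- For all `z, w, s ∈ ℂ` with `s² = 1 − z² − w²`, the point
`I(z,w) = (z, w, 1 − s)/√2` satisfies `ϱ(I(z,w)) = 1 − |z|² − |w|²`.  (This is the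
irrational proper map `I(z,w) = (z, w, 1 − √(1−z²−w²))/√2`, valid for either choice of
square root `s`.) -/
theorem I_map_rho_identity (z w s : ℂ) (hs : s ^ 2 = 1 - z ^ 2 - w ^ 2) :
    rhoIV (z / (Real.sqrt 2 : ℂ), w / (Real.sqrt 2 : ℂ), (1 - s) / (Real.sqrt 2 : ℂ))
      = 1 - ‖z‖ ^ 2 - ‖w‖ ^ 2 := by
  have h2c : ((Real.sqrt 2 : ℝ) : ℂ) ≠ 0 := by
    norm_cast
    positivity
  have hsum : (z / (Real.sqrt 2 : ℂ)) ^ 2 + (w / (Real.sqrt 2 : ℂ)) ^ 2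
      + ((1 - s) / (Real.sqrt 2 : ℂ)) ^ 2 = 1 - s := by
    have h2 : ((Real.sqrt 2 : ℝ) : ℂ) ^ 2 = 2 := by
      norm_cast
      rw [Real.sq_sqrt] <;> norm_num
    field_simp [h2]
    linear_combination (s - 1) * h2 + hs
  have habs : ∀ x : ℂ, ‖x / (Real.sqrt 2 : ℂ)‖ ^ 2 = ‖x‖ ^ 2 / 2 := by
    intro x
    rw [norm_div, div_pow, Complex.norm_real, Real.norm_of_nonneg (Real.sqrt_nonneg 2),
      Real.sq_sqrt (by norm_num : (2:ℝ) ≥ 0)]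
  simp only [rhoIV, hsum, habs]
  ring
end

section
/- Let H(z,w) = (h₁,h₂,h₃) := ( zw, (z²−w²)/2, i(z²+w²)/2 ) and F(z,w) = (f₁,f₂,f₃) := ( z², √2·zw, w² ). Then for all z, w ∈ ℂ one has the identity 2(|h₁|² + |h₂|² + |h₃|²) − |h₁² + h₂² + h₃²|² = |f₁|² + |f₂|² + |f₃|². (This is the relation 2Σ|h_j|² − |Σh_j²|² = Σ|f_j|² linking the proper map P₁ into the type IV domain with the sphere map F : 𝕊³ → 𝕊⁵.) -/
/-- For `H = (zw, (z²−w²)/2, i(z²+w²)/2)` and `F = (z², √2·zw, w²)`, one has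
`2(|h₁|² + |h₂|² + |h₃|²) − |h₁² + h₂² + h₃²|² = |f₁|² + |f₂|² + |f₃|²` for all
`z, w ∈ ℂ`.  (The relation linking the proper map `P₁` into the type IV domain with the
sphere map `F : 𝕊³ → 𝕊⁵`.) -/
theorem P1_sphere_map_relation (z w : ℂ) :
    2 * (‖z * w‖ ^ 2 + ‖(z ^ 2 - w ^ 2) / 2‖ ^ 2
          + ‖Complex.I * (z ^ 2 + w ^ 2) / 2‖ ^ 2)
      - ‖(z * w) ^ 2 + ((z ^ 2 - w ^ 2) / 2) ^ 2
          + (Complex.I * (z ^ 2 + w ^ 2) / 2) ^ 2‖ ^ 2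
    = ‖z ^ 2‖ ^ 2 + ‖(Real.sqrt 2 : ℂ) * z * w‖ ^ 2
        + ‖w ^ 2‖ ^ 2 := by
  have h0 : (z * w) ^ 2 + ((z ^ 2 - w ^ 2) / 2) ^ 2
      + (Complex.I * (z ^ 2 + w ^ 2) / 2) ^ 2 = 0 := by
    have : Complex.I ^ 2 = -1 := Complex.I_sq
    field_simp
    ring_nf
    rw [this]; ring
  rw [h0]
  have hm : ∀ x : ℂ, ‖x‖ * ‖x‖ = Complex.normSq x := fun x => by
    rw [Complex.normSq_eq_norm_sq, sq]
  simp only [norm_zero, pow_two, hm, Complex.normSq_apply, Complex.mul_re,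
    Complex.mul_im, Complex.div_re, Complex.div_im, Complex.sub_re, Complex.sub_im,
    Complex.add_re, Complex.add_im, Complex.I_re, Complex.I_im, Complex.ofReal_re,
    Complex.ofReal_im, Complex.re_ofNat, Complex.im_ofNat]
  ring_nf
  rw [Real.sq_sqrt (by norm_num : (0:ℝ) ≤ 2)]
end

section
/- Let b ∈ ℂ and r ∈ ℝ, and define τ(z,ζ,w) := ( z + b − conj(b)·ζ , ζ , w + r + i|b|² + 2i·conj(b)·z + i·conj(b)²/2 − i·b²/2 − i·conj(b)²·ζ ). Then τ(0,0,0) = ( b, 0, r + i|b|² + i·conj(b)²/2 − i·b²/2 ), and whenever (z,ζ,w) satisfies the defining equation (1−|ζ|²)·Im w = |z|² + Re(z²·conj(ζ)), so does τ(z,ζ,w). (This 3-parameter family generates the transitive part of the automorphism group of 𝒳 corresponding to 𝔤₋₁ ⊕ 𝔤₋₂.) -/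
open Complex in
private lemma cx_iff (a : ℝ) (x y : ℂ) :
    a * x.im = y.re ↔ (a : ℂ) * (x - (starRingEnd ℂ) x) = I * (y + (starRingEnd ℂ) y) := by
  rw [Complex.sub_conj, Complex.add_conj]
  push_cast
  constructor
  · intro h
    have : ((a * x.im : ℝ) : ℂ) = (y.re : ℂ) := by exact_mod_cast h
    push_cast at this
    rw [show (a:ℂ) * (2 * x.im * I) = 2 * I * ((a:ℂ) * x.im) by ring,
        show I * (2 * (y.re:ℂ)) = 2 * I * (y.re:ℂ) by ring, this]
  · intro h
    have h2 : (2 : ℂ) * I * ((a:ℂ) * x.im) = 2 * I * (y.re : ℂ) := by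
      rw [show (2:ℂ) * I * ((a:ℂ) * x.im) = (a:ℂ) * (2 * x.im * I) by ring, h]; ring
    have h3 : ((a:ℂ) * x.im) = (y.re : ℂ) :=
      mul_left_cancel₀ (by simp [Complex.ext_iff] : (2:ℂ) * I ≠ 0) h2
    exact_mod_cast h3

private lemma re_combine (u y : ℂ) :
    ‖u‖ ^ 2 + y.re = (u * (starRingEnd ℂ) u + y).re := by
  rw [Complex.add_re, Complex.mul_conj, ← Complex.normSq_eq_norm_sq]; simp

/-- For `b ∈ ℂ`, `r ∈ ℝ`, the translation-type automorphism
`τ(z,ζ,w) = (z + b − conj(b)ζ, ζ, w + r + i|b|² + 2i·conj(b)·z + i·conj(b)²/2 − i·b²/2 − i·conj(b)²·ζ)`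
sends `(0,0,0)` to `(b, 0, r + i|b|² + i·conj(b)²/2 − i·b²/2)` and preserves the defining
equation `(1−|ζ|²)·Im w = |z|² + Re(z²·conj ζ)` of `𝒳`. -/
theorem transitive_automorphism_of_X (b : ℂ) (r : ℝ) :
    ((0 : ℂ) + b - (starRingEnd ℂ) b * 0 = b ∧ (0 : ℂ) = 0 ∧
      (0 : ℂ) + (r : ℂ) + Complex.I * (Complex.normSq b : ℂ)
          + 2 * Complex.I * (starRingEnd ℂ) b * 0
          + Complex.I * ((starRingEnd ℂ) b) ^ 2 / 2 - Complex.I * b ^ 2 / 2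
          - Complex.I * ((starRingEnd ℂ) b) ^ 2 * 0
        = (r : ℂ) + Complex.I * (Complex.normSq b : ℂ)
          + Complex.I * ((starRingEnd ℂ) b) ^ 2 / 2 - Complex.I * b ^ 2 / 2) ∧
    (∀ z ζ w : ℂ,
      (1 - ‖ζ‖ ^ 2) * w.im
          = ‖z‖ ^ 2 + (z ^ 2 * (starRingEnd ℂ) ζ).re →
      (1 - ‖ζ‖ ^ 2) *
          (w + (r : ℂ) + Complex.I * (Complex.normSq b : ℂ)
            + 2 * Complex.I * (starRingEnd ℂ) b * z
            + Complex.I * ((starRingEnd ℂ) b) ^ 2 / 2 - Complex.I * b ^ 2 / 2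
            - Complex.I * ((starRingEnd ℂ) b) ^ 2 * ζ).im
        = ‖z + b - (starRingEnd ℂ) b * ζ‖ ^ 2
          + ((z + b - (starRingEnd ℂ) b * ζ) ^ 2 * (starRingEnd ℂ) ζ).re) := by
  refine ⟨⟨by ring, rfl, by ring⟩, fun z ζ w h => ?_⟩
  rw [re_combine, cx_iff] at h ⊢
  have habs : ((1 - ‖ζ‖ ^ 2 : ℝ) : ℂ) = 1 - ζ * (starRingEnd ℂ) ζ := by
    push_cast
    rw [show ζ * (starRingEnd ℂ) ζ = (starRingEnd ℂ) ζ * ζ from mul_comm _ _,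
      ← Complex.normSq_eq_conj_mul_self, Complex.normSq_eq_norm_sq]
    push_cast; ring
  rw [habs] at h ⊢
  have hnsq : ((Complex.normSq b : ℝ) : ℂ) = b * (starRingEnd ℂ) b := by
    rw [Complex.mul_conj]
  simp only [map_add, map_mul, map_sub, map_pow, map_div₀, map_ofNat, map_one,
    Complex.conj_conj, Complex.conj_I, Complex.conj_ofReal, hnsq] at h ⊢
  linear_combination h
end

section
/- Let s ∈ ℝ and let (z,ζ,w) ∈ ℂ³ with sw ≠ 1. If (z,ζ,w) satisfies the defining equation (1−|ζ|²)·Im w = |z|² + Re(z²·conj(ζ)), then so does the point ( z/(1−sw) , (ζ − swζ − isz²)/(1−sw) , w/(1−sw) ). (This is the 1-parameter subgroup of automorphisms of 𝒳 obtained by integrating the infinitesimal automorphism zw·∂/∂z − iz²·∂/∂ζ + w²·∂/∂w spanning 𝔤₂.) -/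
set_option maxHeartbeats 4000000
set_option maxRecDepth 8000


/-- For `s ∈ ℝ` and `(z,ζ,w) ∈ ℂ³` with `sw ≠ 1`, if `(z,ζ,w)` satisfies
the defining equation `(1−|ζ|²)·Im w = |z|² + Re(z²·conj ζ)` of `𝒳`, then so does
`(z/(1−sw), (ζ − swζ − isz²)/(1−sw), w/(1−sw))`.  (The 1-parameter subgroup of
automorphisms of `𝒳` obtained by integrating the infinitesimal automorphism spanning
`𝔤₂`.) -/
theorem g2_automorphism_of_X (s : ℝ) (z ζ w : ℂ) (h1 : (s : ℂ) * w ≠ 1)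
    (hX : (1 - ‖ζ‖ ^ 2) * w.im
        = ‖z‖ ^ 2 + (z ^ 2 * (starRingEnd ℂ) ζ).re) :
    (1 - ‖(ζ - (s : ℂ) * w * ζ - Complex.I * (s : ℂ) * z ^ 2) /
          (1 - (s : ℂ) * w)‖ ^ 2) * (w / (1 - (s : ℂ) * w)).im
      = ‖z / (1 - (s : ℂ) * w)‖ ^ 2
        + ((z / (1 - (s : ℂ) * w)) ^ 2 *
            (starRingEnd ℂ) ((ζ - (s : ℂ) * w * ζ - Complex.I * (s : ℂ) * z ^ 2) /
              (1 - (s : ℂ) * w))).re := by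
  set D : ℂ := 1 - (s : ℂ) * w with hD
  set N : ℂ := ζ - (s : ℂ) * w * ζ - Complex.I * (s : ℂ) * z ^ 2 with hN
  have hd : D ≠ 0 := by
    intro h
    apply h1
    rw [hD] at h
    linear_combination -h
  have hK : Complex.normSq D ≠ 0 := by
    simpa [Complex.normSq_eq_zero] using hd
  set K : ℝ := Complex.normSq D with hKdef
  have key : ∀ M E : ℂ, (M * (starRingEnd ℂ) E).re = M.re * E.re + M.im * E.im := by
    intro M E
    rw [Complex.mul_re, Complex.conj_re, Complex.conj_im]
    ring
  have e3 : ((z / D) ^ 2 * (starRingEnd ℂ) (N / D)).re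
      = (z ^ 2 * (starRingEnd ℂ) N * (starRingEnd ℂ) (D ^ 2) * D).re / (K * K * K) := by
    have h0 : (z / D) ^ 2 * (starRingEnd ℂ) (N / D)
        = z ^ 2 * (starRingEnd ℂ) N / (D ^ 2 * (starRingEnd ℂ) D) := by
      rw [div_pow, map_div₀, div_mul_div_comm]
    rw [h0, Complex.div_re]
    have hns : Complex.normSq (D ^ 2 * (starRingEnd ℂ) D) = K * K * K := by
      rw [Complex.normSq_mul, Complex.normSq_conj, map_pow, hKdef]
      ring
    have hc : (starRingEnd ℂ) (D ^ 2) * D = (starRingEnd ℂ) (D ^ 2 * (starRingEnd ℂ) D) := by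
      rw [map_mul, Complex.conj_conj]
    rw [hns, ← add_div]
    congr 1
    conv_rhs => rw [mul_assoc, hc, key]
  rw [Complex.sq_norm, Complex.sq_norm, Complex.normSq_div, Complex.normSq_div,
    Complex.div_im, e3, ← hKdef]
  have hX' : (1 - (ζ.re * ζ.re + ζ.im * ζ.im)) * w.im
      = (z.re * z.re + z.im * z.im)
        + ((z.re * z.re - z.im * z.im) * ζ.re + (2 * z.re * z.im) * ζ.im) := by
    rw [Complex.sq_norm, Complex.sq_norm] at hX
    simp only [Complex.normSq_apply, Complex.mul_re, Complex.conj_re, Complex.conj_im,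
      pow_two, Complex.mul_im] at hX
    linear_combination hX
  have hK3 : (K * K * K) ≠ 0 := by positivity
  have lhs_eq : (1 - Complex.normSq N / K) * (w.im * D.re / K - w.re * D.im / K)
      = ((K - Complex.normSq N) * (w.im * D.re - w.re * D.im) * K) / (K * K * K) := by
    field_simp
  have rhs_eq : Complex.normSq z / K
        + (z ^ 2 * (starRingEnd ℂ) N * (starRingEnd ℂ) (D ^ 2) * D).re / (K * K * K)
      = (Complex.normSq z * (K * K)
          + (z ^ 2 * (starRingEnd ℂ) N * (starRingEnd ℂ) (D ^ 2) * D).re) / (K * K * K) := by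
    field_simp
  rw [lhs_eq, rhs_eq]
  congr 1
  simp only [hKdef, hD, hN, pow_two, Complex.normSq_apply, Complex.mul_re, Complex.mul_im,
    Complex.sub_re, Complex.sub_im, Complex.add_re, Complex.add_im, Complex.one_re,
    Complex.one_im, Complex.ofReal_re, Complex.ofReal_im, Complex.I_re, Complex.I_im,
    Complex.conj_re, Complex.conj_im]
  linear_combination ((1 - s * w.re) * (1 - s * w.re) + s * w.im * (s * w.im)) ^ 2 * hX'
end

section
/- Let a ∈ ℂ and λ, t ∈ ℝ, and let (z₁,z₂,z₃) ∈ ℂ³. Set Δ := (1 + 2|a|² + λ² − 2it) − 2·conj(a)²·(z₁² + z₂² + z₃²) − 4i·conj(a)·z₁ + (1 − 2|a|² − λ² + 2·conj(a)² + 2it)·z₂ − i·(1 − 2|a|² − λ² − 2·conj(a)² + 2it)·z₃, and define W = (W₁,W₂,W₃) ∈ ℂ³ by W₁ := −2ia/(1 + 2|a|² + λ² + 2it), W₂ := (λ² − 1 + 2|a|² − 2a² + 2it)/(2(1 + 2|a|² + λ² + 2it)), W₃ := i(λ² − 1 + 2|a|² + 2a² + 2it)/(2(1 + 2|a|² + λ²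 + 2it)). Then Δ = (1 + 2|a|² + λ² − 2it)·( 1 − 2( conj(W₁)z₁ + conj(W₂)z₂ + conj(W₃)z₃ ) + conj( W₁² + W₂² + W₃² )·( z₁² + z₂² + z₃² ) ). -/
set_option maxHeartbeats 1600000


/-- The common denominator `Δ` of a general CR automorphism of the germ of
the smooth boundary of `D^IV₃` factors as
`Δ = (1 + 2|a|² + λ² − 2it)·(1 − 2(conj(W₁)z₁ + conj(W₂)z₂ + conj(W₃)z₃)
      + conj(W₁² + W₂² + W₃²)·(z₁² + z₂² + z₃²))`,
where `W = (W₁,W₂,W₃)` is the point of `D^IV₃` mapped to the origin. -/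
theorem delta_bergman_factorization (a : ℂ) (l t : ℝ) (z1 z2 z3 W1 W2 W3 Δ : ℂ)
    (hW1 : W1 = -2 * Complex.I * a /
        (1 + 2 * (Complex.normSq a : ℂ) + (l : ℂ) ^ 2 + 2 * Complex.I * (t : ℂ)))
    (hW2 : W2 = ((l : ℂ) ^ 2 - 1 + 2 * (Complex.normSq a : ℂ) - 2 * a ^ 2
          + 2 * Complex.I * (t : ℂ)) /
        (2 * (1 + 2 * (Complex.normSq a : ℂ) + (l : ℂ) ^ 2 + 2 * Complex.I * (t : ℂ))))
    (hW3 : W3 = Complex.I * ((l : ℂ) ^ 2 - 1 + 2 * (Complex.normSq a : ℂ) + 2 * a ^ 2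
          + 2 * Complex.I * (t : ℂ)) /
        (2 * (1 + 2 * (Complex.normSq a : ℂ) + (l : ℂ) ^ 2 + 2 * Complex.I * (t : ℂ))))
    (hΔ : Δ = (1 + 2 * (Complex.normSq a : ℂ) + (l : ℂ) ^ 2 - 2 * Complex.I * (t : ℂ))
          - 2 * ((starRingEnd ℂ) a) ^ 2 * (z1 ^ 2 + z2 ^ 2 + z3 ^ 2)
          - 4 * Complex.I * (starRingEnd ℂ) a * z1
          + (1 - 2 * (Complex.normSq a : ℂ) - (l : ℂ) ^ 2 + 2 * ((starRingEnd ℂ) a) ^ 2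
              + 2 * Complex.I * (t : ℂ)) * z2
          - Complex.I * (1 - 2 * (Complex.normSq a : ℂ) - (l : ℂ) ^ 2
              - 2 * ((starRingEnd ℂ) a) ^ 2 + 2 * Complex.I * (t : ℂ)) * z3) :
    Δ = (1 + 2 * (Complex.normSq a : ℂ) + (l : ℂ) ^ 2 - 2 * Complex.I * (t : ℂ)) *
        (1 - 2 * ((starRingEnd ℂ) W1 * z1 + (starRingEnd ℂ) W2 * z2
              + (starRingEnd ℂ) W3 * z3)
          + (starRingEnd ℂ) (W1 ^ 2 + W2 ^ 2 + W3 ^ 2) * (z1 ^ 2 + z2 ^ 2 + z3 ^ 2)) := by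
  have hns : (Complex.normSq a : ℂ) = (starRingEnd ℂ) a * a := by
    rw [mul_comm]; exact (Complex.mul_conj a).symm
  set d : ℂ := 1 + 2 * (Complex.normSq a : ℂ) + (l : ℂ) ^ 2 + 2 * Complex.I * (t : ℂ) with hddef
  have hdbdef : (1 + 2 * ((starRingEnd ℂ) a * a) + (l : ℂ) ^ 2 - 2 * Complex.I * (t : ℂ))
      = 1 + 2 * ((starRingEnd ℂ) a * a) + (l : ℂ) ^ 2 - 2 * Complex.I * (t : ℂ) := rfl
  set db : ℂ := 1 + 2 * ((starRingEnd ℂ) a * a) + (l : ℂ) ^ 2 - 2 * Complex.I * (t : ℂ)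
    with hdb_def
  have hdb : db ≠ 0 := by
    intro h
    have hre := congrArg Complex.re h
    rw [hdb_def, ← hns] at hre
    simp [Complex.add_re, Complex.sub_re, Complex.mul_re, ← Complex.ofReal_pow] at hre
    nlinarith [Complex.normSq_nonneg a, sq_nonneg l]
  have h2db : (2 : ℂ) * db ≠ 0 := mul_ne_zero two_ne_zero hdb
  have hconjd : (starRingEnd ℂ) d = db := by
    rw [hddef, hdb_def]
    simp only [map_add, map_mul, map_one, map_ofNat, map_pow, Complex.conj_I,
      Complex.conj_ofReal]
    rw [hns]; ring
  have hconj2d : (starRingEnd ℂ) (2 * d) = 2 * db := by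
    rw [map_mul, hconjd, map_ofNat]
  have hcW1 : (starRingEnd ℂ) W1 = 4 * Complex.I * (starRingEnd ℂ) a / (2 * db) := by
    rw [hW1, map_div₀, hconjd]
    rw [div_eq_div_iff hdb h2db]
    simp only [map_mul, map_neg, map_ofNat, Complex.conj_I]
    ring
  have hcW2 : (starRingEnd ℂ) W2 =
      ((l : ℂ) ^ 2 - 1 + 2 * ((starRingEnd ℂ) a * a) - 2 * ((starRingEnd ℂ) a) ^ 2
        - 2 * Complex.I * (t : ℂ)) / (2 * db) := by
    rw [hW2, map_div₀, hconj2d]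
    rw [div_eq_div_iff h2db h2db]
    simp only [map_add, map_sub, map_mul, map_one, map_ofNat, map_pow, Complex.conj_I,
      Complex.conj_ofReal]
    rw [hns]; ring
  have hcW3 : (starRingEnd ℂ) W3 =
      -Complex.I * ((l : ℂ) ^ 2 - 1 + 2 * ((starRingEnd ℂ) a * a)
        + 2 * ((starRingEnd ℂ) a) ^ 2 - 2 * Complex.I * (t : ℂ)) / (2 * db) := by
    rw [hW3, map_div₀, hconj2d]
    rw [div_eq_div_iff h2db h2db]
    simp only [map_add, map_sub, map_mul, map_one, map_ofNat, map_pow, Complex.conj_I,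
      Complex.conj_ofReal]
    rw [hns]; ring
  have hI : Complex.I ^ 2 = -1 := Complex.I_sq
  have h3 : Complex.I ^ 3 = -Complex.I := by rw [pow_succ, hI]; ring
  have h4 : Complex.I ^ 4 = 1 := by rw [show (4:ℕ)=2*2 from rfl, pow_mul, hI]; ring
  have h5 : Complex.I ^ 5 = Complex.I := by rw [pow_succ, h4]; ring
  have h6 : Complex.I ^ 6 = -1 := by rw [pow_succ, h5, Complex.I_mul_I]
  have h7 : Complex.I ^ 7 = -Complex.I := by rw [pow_succ, h6]; ring
  have h8 : Complex.I ^ 8 = 1 := by rw [pow_succ, h7, neg_mul, Complex.I_mul_I, neg_neg]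
  have hsq : (starRingEnd ℂ) W1 ^ 2 + (starRingEnd ℂ) W2 ^ 2 + (starRingEnd ℂ) W3 ^ 2
      = -2 * ((starRingEnd ℂ) a) ^ 2 / db := by
    rw [hcW1, hcW2, hcW3, div_pow, div_pow, div_pow, ← add_div, ← add_div]
    rw [div_eq_div_iff (pow_ne_zero 2 h2db) hdb]
    rw [hdb_def]
    ring_nf
    simp only [hI, h3, h4, h5, h6, h7, h8]
    ring
  rw [hΔ, map_add, map_add, map_pow, map_pow, map_pow, hsq, hcW1, hcW2, hcW3, hns, ← hdb_def]
  field_simp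
  ring_nf
end

section
/- Let t ∈ ℝ, and let (z,w) ∈ ℂ² with w ≠ −t. Define the point (z', ζ', w') := ( z , −iz²/(w + t) , w + t ). Then w'ζ' + i·z'² = 0, and (1 − |ζ'|²)·Im w' − |z'|² − Re( z'²·conj(ζ') ) = Im w − |z|². In particular, if Im w = |z|² (and w ≠ −t), then (z',ζ',w') satisfies the defining equation of 𝒳, so the map H_t(z,w) = (z, −iz²/(w+t), w+t) sends ℍ³ ∖ {(0,−t)} into the zero set of the defining function of 𝒳 and into the variety V = {wζ + iz² = 0}. -/
/-- For `t ∈ ℝ` and `(z,w) ∈ ℂ²` with `w ≠ −t`, the point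
`(z', ζ', w') = (z, −iz²/(w+t), w+t)` satisfies `w'ζ' + i·z'² = 0` and
`(1 − |ζ'|²)·Im w' − |z'|² − Re(z'²·conj ζ') = Im w − |z|².  In particular, if
`Im w = |z|²` then `(z',ζ',w')` satisfies the defining equation of `𝒳`: the map
`H_t(z,w) = (z, −iz²/(w+t), w+t)` sends `ℍ³ ∖ {(0,−t)}` into the zero set of the
defining function of `𝒳` and into the variety `V = {wζ + iz² = 0}`. -/
theorem Ht_into_X_inter_V (t : ℝ) (z w : ℂ) (hw : w ≠ -(t : ℂ)) :
    (w + (t : ℂ)) * (-Complex.I * z ^ 2 / (w + (t : ℂ))) + Complex.I * z ^ 2 = 0 ∧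
    ((1 - ‖-Complex.I * z ^ 2 / (w + (t : ℂ))‖ ^ 2) * (w + (t : ℂ)).im
        - ‖z‖ ^ 2
        - (z ^ 2 * (starRingEnd ℂ) (-Complex.I * z ^ 2 / (w + (t : ℂ)))).re
      = w.im - ‖z‖ ^ 2) ∧
    (w.im = ‖z‖ ^ 2 →
      (1 - ‖-Complex.I * z ^ 2 / (w + (t : ℂ))‖ ^ 2) * (w + (t : ℂ)).im
        = ‖z‖ ^ 2
          + (z ^ 2 * (starRingEnd ℂ) (-Complex.I * z ^ 2 / (w + (t : ℂ)))).re) := by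
  have hu : w + (t : ℂ) ≠ 0 := fun h => hw (by linear_combination h)
  have hn : Complex.normSq (w + (t : ℂ)) ≠ 0 := fun h => hu (Complex.normSq_eq_zero.mp h)
  have h1 : ‖-Complex.I * z ^ 2 / (w + (t : ℂ))‖ ^ 2
      = Complex.normSq z ^ 2 / Complex.normSq (w + (t : ℂ)) := by
    rw [Complex.sq_norm]
    simp [Complex.normSq_div, Complex.normSq_mul]
  have h2 : (z ^ 2 * (starRingEnd ℂ) (-Complex.I * z ^ 2 / (w + (t : ℂ)))).re
      = -(Complex.normSq z ^ 2 * w.im) / Complex.normSq (w + (t : ℂ)) := by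
    rw [map_div₀, ← mul_div_assoc, Complex.div_re]
    simp [Complex.normSq_conj, Complex.normSq_apply, pow_two, Complex.mul_re, Complex.mul_im, Complex.conj_re, Complex.conj_im, Complex.add_re, Complex.add_im]
    ring
  have him : (w + (t : ℂ)).im = w.im := by simp
  have habs : ‖z‖ ^ 2 = Complex.normSq z := Complex.sq_norm z
  have key : (1 - ‖-Complex.I * z ^ 2 / (w + (t : ℂ))‖ ^ 2) * (w + (t : ℂ)).im
        - ‖z‖ ^ 2
        - (z ^ 2 * (starRingEnd ℂ) (-Complex.I * z ^ 2 / (w + (t : ℂ)))).re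
      = w.im - ‖z‖ ^ 2 := by
    rw [h1, h2, him]
    field_simp
    ring
  refine ⟨by field_simp; ring, key, fun h => by linarith [key]⟩
end

section
/- Let t ∈ ℝ and define f(z,w) := z(1 + 2tw³), φ(z,w) := −4it·z²w², g(z,w) := w + tw⁴. Then for all (z,w) ∈ ℂ² with Im w = |z|² one has the identity (1 − |φ(z,w)|²)·Im g(z,w) − |f(z,w)|² − Re( f(z,w)²·conj(φ(z,w)) ) = −4t²·|z|²·|w|⁶. Consequently, for every open neighbourhood U of 0 in ℂ²: the map H_t = (f, φ, g) sends every point of ℍ³ ∩ U into the zero set of the defining function of 𝒳 if and only if t = 0. -/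
set_option maxHeartbeats 2000000

lemma main_id (t : ℝ) : ∀ z w : ℂ, w.im = ‖z‖ ^ 2 →
      (1 - ‖-4 * Complex.I * (t : ℂ) * z ^ 2 * w ^ 2‖ ^ 2) *
          (w + (t : ℂ) * w ^ 4).im
        - ‖z * (1 + 2 * (t : ℂ) * w ^ 3)‖ ^ 2
        - ((z * (1 + 2 * (t : ℂ) * w ^ 3)) ^ 2 *
            (starRingEnd ℂ) (-4 * Complex.I * (t : ℂ) * z ^ 2 * w ^ 2)).re
      = -4 * t ^ 2 * ‖z‖ ^ 2 * ‖w‖ ^ 6 := by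
  intro z w h
  have hz : ‖z‖ ^ 2 = z.re ^ 2 + z.im ^ 2 := by
    rw [Complex.sq_norm, Complex.normSq_apply]; ring
  have h' : w.im = z.re ^ 2 + z.im ^ 2 := by rw [h, hz]
  have hw6 : ‖w‖ ^ 6 = (w.re ^ 2 + w.im ^ 2) ^ 3 := by
    rw [show (6:ℕ) = 2 * 3 by rfl, pow_mul, Complex.sq_norm, Complex.normSq_apply]; ring
  rw [hw6]
  simp only [Complex.sq_norm]
  simp only [Complex.normSq_apply, Complex.mul_re, Complex.mul_im,
    Complex.add_re, Complex.add_im, Complex.one_re, Complex.one_im, Complex.I_re,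
    Complex.I_im, Complex.ofReal_re, Complex.ofReal_im, Complex.neg_re, Complex.neg_im,
    Complex.conj_re, Complex.conj_im, pow_succ, pow_zero, one_mul,
    Complex.re_ofNat, Complex.im_ofNat]
  rw [h']
  ring

/-- For `t ∈ ℝ`, `f(z,w) = z(1+2tw³)`, `φ(z,w) = −4it·z²w²`,
`g(z,w) = w + tw⁴`, one has, for all `(z,w)` with `Im w = |z|²`,
`(1 − |φ|²)·Im g − |f|² − Re(f²·conj φ) = −4t²·|z|²·|w|⁶`.  Consequently, for every open
neighbourhood `U` of `0` in `ℂ²`, the map `H_t = (f,φ,g)` sends every point of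
`ℍ³ ∩ U` into the zero set of the defining function of `𝒳` if and only if `t = 0`. -/
theorem Ht_quartic_example (t : ℝ) :
    (∀ z w : ℂ, w.im = ‖z‖ ^ 2 →
      (1 - ‖-4 * Complex.I * (t : ℂ) * z ^ 2 * w ^ 2‖ ^ 2) *
          (w + (t : ℂ) * w ^ 4).im
        - ‖z * (1 + 2 * (t : ℂ) * w ^ 3)‖ ^ 2
        - ((z * (1 + 2 * (t : ℂ) * w ^ 3)) ^ 2 *
            (starRingEnd ℂ) (-4 * Complex.I * (t : ℂ) * z ^ 2 * w ^ 2)).re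
      = -4 * t ^ 2 * ‖z‖ ^ 2 * ‖w‖ ^ 6) ∧
    (∀ U : Set (ℂ × ℂ), IsOpen U → (0, 0) ∈ U →
      ((∀ p ∈ U, p.2.im = ‖p.1‖ ^ 2 →
          (1 - ‖-4 * Complex.I * (t : ℂ) * p.1 ^ 2 * p.2 ^ 2‖ ^ 2) *
              (p.2 + (t : ℂ) * p.2 ^ 4).im
            - ‖p.1 * (1 + 2 * (t : ℂ) * p.2 ^ 3)‖ ^ 2
            - ((p.1 * (1 + 2 * (t : ℂ) * p.2 ^ 3)) ^ 2 *
                (starRingEnd ℂ) (-4 * Complex.I * (t : ℂ) * p.1 ^ 2 * p.2 ^ 2)).re = 0)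
        ↔ t = 0)) := by
  refine ⟨main_id t, fun U hU h0 => ⟨fun hall => ?_, fun ht p hp him => ?_⟩⟩
  · obtain ⟨ε, hε, hball⟩ := Metric.isOpen_iff.mp hU (0, 0) h0
    set δ : ℝ := min ε 1 / 4 with hδdef
    have hδpos : 0 < δ := by positivity
    have hδε : δ + δ ^ 2 < ε := by
      have h1 : δ ≤ 1 / 4 := by
        rw [hδdef]; exact div_le_div_of_nonneg_right (min_le_right _ _) (by norm_num)
      have h2 : δ ≤ ε / 4 := by
        rw [hδdef]; exact div_le_div_of_nonneg_right (min_le_left _ _) (by norm_num)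
      nlinarith
    set z : ℂ := (δ : ℂ) with hz
    set w : ℂ := (δ : ℂ) + Complex.I * (δ : ℂ) ^ 2 with hw
    have habsz : ‖z‖ = δ := by
      rw [hz, Complex.norm_real, Real.norm_eq_abs, abs_of_pos hδpos]
    have him : w.im = ‖z‖ ^ 2 := by
      simp [hw, habsz, Complex.add_im, Complex.mul_im, ← Complex.ofReal_pow]
    have hmem : (z, w) ∈ U := by
      apply hball
      rw [Metric.mem_ball, Prod.dist_eq]
      simp only [dist_zero_right]
      apply max_lt
      · calc ‖z‖ = δ := habsz
          _ < ε := by nlinarith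
      · calc ‖w‖ ≤ ‖(δ : ℂ)‖ + ‖Complex.I * (δ : ℂ) ^ 2‖ := norm_add_le _ _
          _ = δ + δ ^ 2 := by
              simp [Complex.norm_real, abs_of_pos hδpos, norm_pow,
                Complex.norm_real]
          _ < ε := hδε
    have hzero := hall (z, w) hmem him
    have hid := main_id t z w him
    rw [hzero] at hid
    have hwpos : 0 < ‖w‖ := by
      apply norm_pos_iff.mpr
      intro hcon
      have : w.re = 0 := by rw [hcon]; rfl
      simp [hw, Complex.add_re, Complex.mul_re, ← Complex.ofReal_pow] at this
      exact absurd this (ne_of_gt hδpos)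
    have : t ^ 2 * (‖z‖ ^ 2 * ‖w‖ ^ 6) = 0 := by linarith
    have ht2 : t ^ 2 = 0 := by
      rcases mul_eq_zero.mp this with h1 | h1
      · exact h1
      · exfalso
        have : (0:ℝ) < ‖z‖ ^ 2 * ‖w‖ ^ 6 := mul_pos (pow_pos (habsz ▸ hδpos) 2) (pow_pos hwpos 6)
        linarith
    exact pow_eq_zero_iff (by norm_num) |>.mp ht2
  · rw [main_id t p.1 p.2 him, ht]
    ring
end

section
/- Let U ⊆ ℂ² be a connected open neighbourhood of 0 and let f, φ, g : U → ℂ be holomorphic (complex analytic) functions with f(0) = φ(0) = g(0) = 0. Suppose that for every (z,w) ∈ U, ( g(z,w) − conj(g(z,w)) )·( 1 − |φ(z,w)|² ) − 2i·|f(z,w)|² − 2i·Re( f(z,w)²·conj(φ(z,w)) ) = 0. Then g ≡ 0 and f ≡ 0 on U. (Hence every nowhere CR transversal CR map H = (f, φ, g) from ℍ³ into 𝒳 with H(0) = 0 has the form (z,w) ↦ (0, φ(z,w), 0).) -/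
open Metric Complex Real

open Metric Complex

lemma ident2 {U : Set (ℂ × ℂ)} (hU : IsOpen U) (hconn : IsPreconnected U)
    {h : ℂ × ℂ → ℂ} (hh : DifferentiableOn ℂ h U)
    {p₀ : ℂ × ℂ} (hp₀ : p₀ ∈ U) (hloc : ∀ᶠ q in nhds p₀, h q = 0) :
    ∀ p ∈ U, h p = 0 := by
  set S : Set (ℂ × ℂ) := {p | ∀ᶠ q in nhds p, h q = 0} with hS
  have hSopen : IsOpen S := by
    rw [isOpen_iff_mem_nhds]
    intro p hp
    rcases _root_.eventually_nhds_iff.1 hp with ⟨V, hV0, hVopen, hpV⟩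
    exact Filter.eventually_of_mem (hVopen.mem_nhds hpV)
      (fun q hq => _root_.eventually_nhds_iff.2 ⟨V, hV0, hVopen, hq⟩)
  have key : closure S ∩ U ⊆ S := by
    intro p ⟨hpc, hpU⟩
    rcases Metric.isOpen_iff.1 hU p hpU with ⟨r, hr, hball⟩
    rcases Metric.mem_closure_iff.1 hpc (r/4) (by linarith) with ⟨q, hqS, hqd⟩
    rw [dist_comm] at hqd
    -- show h = 0 on ball p (r/4)
    have hzero : ∀ x ∈ ball p (r/4), h x = 0 := by
      intro x hx
      set L : ℂ → ℂ × ℂ := fun t => q + t • (x - q) with hL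
      have hmaps : ∀ t ∈ ball (0:ℂ) (3/2), L t ∈ U := by
        intro t ht
        apply hball
        have h1 : dist q p < r/4 := hqd
        have h2 : dist x q ≤ dist x p + dist p q := dist_triangle x p q
        have h3 : dist x p < r/4 := hx
        have h4 : ‖t‖ < 3/2 := mem_ball_zero_iff.1 ht
        have : dist (L t) p ≤ dist (L t) q + dist q p := dist_triangle _ _ _
        have h5 : dist (L t) q = ‖t‖ * dist x q := by
          simp [hL, dist_eq_norm, norm_smul]
        have h6 : dist x q < r/2 := by
          have := dist_comm p q ▸ h1; linarith [dist_comm p q]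
        have h7 : ‖t‖ * dist x q ≤ (3/2) * (r/2) := by
          apply mul_le_mul h4.le h6.le dist_nonneg (by norm_num)
        rw [mem_ball]
        calc dist (L t) p ≤ ‖t‖ * dist x q + dist q p := by rw [← h5]; exact this
          _ < r := by linarith
      have hLdiff : DifferentiableOn ℂ (h ∘ L) (ball (0:ℂ) (3/2)) := by
        apply hh.comp
        · intro t ht
          exact (differentiableAt_id.smul_const (x - q)).const_add q |>.differentiableWithinAt
        · exact hmaps
      have hanal : AnalyticOnNhd ℂ (h ∘ L) (ball (0:ℂ) (3/2)) :=
        hLdiff.analyticOnNhd isOpen_ball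
      have h0mem : (0:ℂ) ∈ ball (0:ℂ) (3/2) := by simp
      have hLcont : ContinuousAt L 0 := by fun_prop
      have hL0 : L 0 = q := by simp [hL]
      have hev : ∀ᶠ t in nhds (0:ℂ), (h ∘ L) t = 0 := by
        have := hLcont.tendsto
        rw [hL0] at this
        exact this.eventually hqS
      have := hanal.eqOn_zero_of_preconnected_of_eventuallyEq_zero
        (convex_ball (0:ℂ) (3/2)).isPreconnected h0mem hev
      have h1mem : (1:ℂ) ∈ ball (0:ℂ) (3/2) := by
        rw [mem_ball_zero_iff]; simp; norm_num
      have := this h1mem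
      simpa [hL] using this
    have : ball p (r/4) ∈ nhds p := ball_mem_nhds p (by linarith)
    exact Filter.eventually_of_mem this hzero
  have hsub : U ⊆ S :=
    hconn.subset_of_closure_inter_subset hSopen ⟨p₀, hp₀, hloc⟩ key
  exact fun p hp => (hsub hp).self_of_nhds



/-- Let `U ⊆ ℂ²` be a connected open neighbourhood of `0` and let
`f, φ, g : ℂ² → ℂ` be holomorphic on `U` with `f(0) = φ(0) = g(0) = 0`.  If the
mapping equation with identically vanishing transversality factor
`(g − conj g)(1 − |φ|²) − 2i|f|² − 2i·Re(f²·conj φ) = 0`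
holds at every point of `U`, then `g ≡ 0` and `f ≡ 0` on `U`.  (Hence every nowhere CR
transversal CR map `H = (f,φ,g)` from `ℍ³` into `𝒳` with `H(0) = 0` has the form
`(z,w) ↦ (0, φ(z,w), 0)`.) -/
theorem nowhere_transversal_maps (U : Set (ℂ × ℂ)) (hU : IsOpen U)
    (hconn : IsConnected U) (h0 : ((0 : ℂ), (0 : ℂ)) ∈ U)
    (f φ g : ℂ × ℂ → ℂ)
    (hf : DifferentiableOn ℂ f U) (hφ : DifferentiableOn ℂ φ U)
    (hg : DifferentiableOn ℂ g U)
    (hf0 : f (0, 0) = 0) (hφ0 : φ (0, 0) = 0) (hg0 : g (0, 0) = 0)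
    (heq : ∀ p ∈ U,
      (g p - (starRingEnd ℂ) (g p)) * (1 - (‖φ p‖ : ℂ) ^ 2)
        - 2 * Complex.I * (‖f p‖ : ℂ) ^ 2
        - 2 * Complex.I * ((((f p) ^ 2 * (starRingEnd ℂ) (φ p)).re : ℝ) : ℂ) = 0) :
    ∀ p ∈ U, g p = 0 ∧ f p = 0 := by
  -- real form of the equation
  have him : ∀ p ∈ U, (g p).im * (1 - (‖φ p‖)^2)
      = (‖f p‖)^2 + ((f p)^2 * (starRingEnd ℂ) (φ p)).re := by
    intro p hp
    have h := heq p hp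
    have := congrArg Complex.im h
    simp [Complex.sub_im, Complex.mul_im, Complex.mul_re, Complex.conj_re, Complex.conj_im,
      ← Complex.ofReal_pow] at this
    ring_nf at this ⊢
    rw [Complex.mul_re]
    simp [Complex.conj_re, Complex.conj_im]
    linarith
  -- find a ball where |φ| < 1 and |g| < 1
  have hφc : ContinuousAt φ ((0:ℂ), (0:ℂ)) :=
    (hφ.differentiableAt (hU.mem_nhds h0)).continuousAt
  have hgc : ContinuousAt g ((0:ℂ), (0:ℂ)) :=
    (hg.differentiableAt (hU.mem_nhds h0)).continuousAt
  have hφev : ∀ᶠ p in nhds ((0:ℂ),(0:ℂ)), ‖φ p‖ < 1 := by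
    have : ContinuousAt (fun p => ‖φ p‖) ((0:ℂ),(0:ℂ)) :=
      continuous_norm.continuousAt.comp hφc
    have h1 : (fun p => ‖φ p‖) ((0:ℂ),(0:ℂ)) < 1 := by
      show ‖φ (0,0)‖ < 1
      rw [hφ0]; simp
    exact this.eventually_lt_const h1
  have hgev : ∀ᶠ p in nhds ((0:ℂ),(0:ℂ)), ‖g p‖ < 1 := by
    have : ContinuousAt (fun p => ‖g p‖) ((0:ℂ),(0:ℂ)) :=
      continuous_norm.continuousAt.comp hgc
    have h1 : (fun p => ‖g p‖) ((0:ℂ),(0:ℂ)) < 1 := by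
      show ‖g (0,0)‖ < 1
      rw [hg0]; simp
    exact this.eventually_lt_const h1
  have hUev : ∀ᶠ p in nhds ((0:ℂ),(0:ℂ)), p ∈ U := hU.mem_nhds h0
  obtain ⟨ε, hε, hB⟩ := Metric.eventually_nhds_iff.1 (hUev.and (hφev.and hgev))
  set B := ball ((0:ℂ),(0:ℂ)) ε with hBdef
  have hBU : B ⊆ U := fun p hp => (hB (mem_ball.1 hp)).1
  have hBφ : ∀ p ∈ B, ‖φ p‖ < 1 := fun p hp => (hB (mem_ball.1 hp)).2.1
  have hBg : ∀ p ∈ B, ‖g p‖ < 1 := fun p hp => (hB (mem_ball.1 hp)).2.2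
  have h0B : ((0:ℂ),(0:ℂ)) ∈ B := mem_ball_self hε
  -- Im g ≥ 0 on B
  have himpos : ∀ p ∈ B, 0 ≤ (g p).im := by
    intro p hp
    have h1 := him p (hBU hp)
    set x := ‖φ p‖ with hx
    set y := ‖f p‖ with hy
    have hxnn : 0 ≤ x := norm_nonneg _
    have hynn : 0 ≤ y := norm_nonneg _
    have hx1 : x < 1 := hBφ p hp
    have hR : |((f p)^2 * (starRingEnd ℂ) (φ p)).re| ≤ y^2 * x := by
      have := Complex.abs_re_le_norm ((f p)^2 * (starRingEnd ℂ) (φ p))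
      simpa [map_mul, map_pow, Complex.norm_conj, hx, hy] using this
    have hR' := abs_le.1 hR
    have hpos : 0 < 1 - x^2 := by nlinarith
    have hnn : 0 ≤ (g p).im * (1 - x^2) := by
      nlinarith [mul_nonneg (sq_nonneg y) (sub_nonneg.2 hx1.le)]
    by_contra hc
    push_neg at hc
    nlinarith [mul_pos (neg_pos.2 hc) hpos]
  -- max modulus: exp(I g) has max at 0
  have hFdiff : DifferentiableOn ℂ (fun p => Complex.exp (Complex.I * g p)) B :=
    ((hg.mono hBU).const_mul Complex.I).cexp
  have hmax : IsMaxOn (norm ∘ fun p => Complex.exp (Complex.I * g p)) B ((0:ℂ),(0:ℂ)) := by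
    intro p hp
    simp only [Function.comp, Complex.norm_exp, Set.mem_setOf_eq]
    have : (Complex.I * g p).re = -(g p).im := by simp [Complex.mul_re]
    rw [this, hg0]
    simp only [mul_zero, Complex.zero_re, neg_zero]
    exact Real.exp_le_exp.2 (by linarith [himpos p hp])
  have hEq := Complex.eqOn_of_isPreconnected_of_isMaxOn_norm
    (convex_ball _ _).isPreconnected isOpen_ball hFdiff h0B hmax
  have hgB : ∀ p ∈ B, g p = 0 := by
    intro p hp
    have := hEq hp
    simp only [Function.const_apply, hg0, mul_zero, Complex.exp_zero] at this
    rcases Complex.exp_eq_one_iff.1 this with ⟨n, hn⟩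
    have hgpn : g p = (n:ℂ) * (2 * Real.pi) := by
      have : Complex.I * g p = Complex.I * ((n:ℂ) * (2 * Real.pi)) := by
        rw [hn]; push_cast; ring
      exact mul_left_cancel₀ Complex.I_ne_zero this
    by_cases hn0 : n = 0
    · simp [hgpn, hn0]
    · exfalso
      have hgpn' : g p = (((n : ℝ) * (2 * Real.pi) : ℝ) : ℂ) := by
        rw [hgpn]; push_cast; ring
      have habs := hBg p hp
      rw [hgpn', Complex.norm_real, Real.norm_eq_abs, abs_mul, abs_of_pos (by positivity : (0:ℝ) < 2 * Real.pi)] at habs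
      have h1 : (1:ℝ) ≤ |(n:ℝ)| := by
        rw [← Int.cast_abs]
        exact_mod_cast Int.one_le_abs hn0
      nlinarith [Real.pi_gt_three]
  -- identity theorem for g
  have hgU : ∀ p ∈ U, g p = 0 :=
    ident2 hU hconn.isPreconnected hg h0
      (Filter.eventually_of_mem (ball_mem_nhds _ hε) hgB)
  -- f = 0 on B
  have hfB : ∀ p ∈ B, f p = 0 := by
    intro p hp
    have h1 := him p (hBU hp)
    rw [hgU p (hBU hp)] at h1
    simp only [Complex.zero_im, zero_mul] at h1
    set x := ‖φ p‖ with hx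
    set y := ‖f p‖ with hy
    have hxnn : 0 ≤ x := norm_nonneg _
    have hynn : 0 ≤ y := norm_nonneg _
    have hx1 : x < 1 := hBφ p hp
    have hR : |((f p)^2 * (starRingEnd ℂ) (φ p)).re| ≤ y^2 * x := by
      have := Complex.abs_re_le_norm ((f p)^2 * (starRingEnd ℂ) (φ p))
      simpa [map_mul, map_pow, Complex.norm_conj, hx, hy] using this
    have hR' := abs_le.1 hR
    have hy2 : y^2 * (1 - x) ≤ 0 := by nlinarith
    have hle : y^2 ≤ 0 := by
      have h2 := (mul_le_mul_iff_of_pos_right (sub_pos.2 hx1)).1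
        (by linarith : y^2 * (1-x) ≤ 0 * (1-x))
      linarith
    have hysq : y^2 = 0 := le_antisymm hle (sq_nonneg y)
    have hy0 : y = 0 := by
      exact pow_eq_zero_iff (two_ne_zero) |>.1 hysq
    rw [hy] at hy0
    exact norm_eq_zero.1 hy0
  have hfU : ∀ p ∈ U, f p = 0 :=
    ident2 hU hconn.isPreconnected hf h0
      (Filter.eventually_of_mem (ball_mem_nhds _ hε) hfB)
  exact fun p hp => ⟨hgU p hp, hfU p hp⟩
end
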